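/- The number of orbits of the action (h₁,h₂)·f = h₂ f h₁^{-1} of B_{n+1} × B_{n+1} on the set of upper-triangular matrices U_{n+1} ⊆ Mat_{n+1}(ℂ) is the Bell number b_{n+2}. -/

import Mathlib

/-- `M` is upper-triangular. -/
def UT (n : ℕ) (M : Matrix (Fin (n+1)) (Fin (n+1)) ℂ) : Prop :=
  ∀ i j : Fin (n+1), (j : ℕ) < (i : ℕ) → M i j = 0

namespace Stmt6

open Matrix Finset

variable {n : ℕ}

abbrev Mt (n : ℕ) := Matrix (Fin (n+1)) (Fin (n+1)) ℂ

lemma ut_bt {M : Mt n} (h : UT n M) : M.BlockTriangular id := fun i j hij => h i j hij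

lemma bt_ut {M : Mt n} (h : M.BlockTriangular id) : UT n M := fun i j hij => h hij

lemma ut_one : UT n (1 : Mt n) := by
  intro i j hij
  apply Matrix.one_apply_ne
  intro h
  subst h
  omega

lemma ut_mul {M N : Mt n} (hM : UT n M) (hN : UT n N) : UT n (M * N) :=
  bt_ut ((ut_bt hM).mul (ut_bt hN))

lemma ut_det {M : Mt n} (hM : UT n M) : M.det = ∏ i, M i i :=
  Matrix.det_of_upperTriangular (ut_bt hM)

lemma ut_inv {M : Mt n} (hM : UT n M) (hu : IsUnit M) : UT n M⁻¹ := by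
  have hd : IsUnit M.det := (Matrix.isUnit_iff_isUnit_det M).mp hu
  haveI := M.invertibleOfIsUnitDet hd
  exact bt_ut (Matrix.blockTriangular_inv_of_blockTriangular (ut_bt hM))

/-- The orbit relation. -/
def Rel (n : ℕ) (f g : {M : Mt n // UT n M}) : Prop :=
  ∃ h₁ h₂ : Mt n,
    UT n h₁ ∧ IsUnit h₁ ∧ UT n h₂ ∧ IsUnit h₂ ∧
      (g : Mt n) = h₂ * (f : Mt n) * h₁⁻¹

lemma rel_iff {f g : {M : Mt n // UT n M}} :
    Rel n f g ↔ ∃ A B : Mt n, UT n A ∧ IsUnit A ∧ UT n B ∧ IsUnit B ∧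
      (g : Mt n) = A * (f : Mt n) * B := by
  constructor
  · rintro ⟨h₁, h₂, u1, u2, u3, u4, h⟩
    exact ⟨h₂, h₁⁻¹, u3, u4, ut_inv u1 u2, (Matrix.isUnit_nonsing_inv_iff).mpr u2, h⟩
  · rintro ⟨A, B, u1, u2, u3, u4, h⟩
    refine ⟨B⁻¹, A, ut_inv u3 u4, (Matrix.isUnit_nonsing_inv_iff).mpr u4, u1, u2, ?_⟩
    rw [Matrix.nonsing_inv_nonsing_inv _ ((Matrix.isUnit_iff_isUnit_det B).mp u4)]
    exact h

lemma rel_equiv : Equivalence (Rel n) := by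
  constructor
  · intro f
    rw [rel_iff]
    exact ⟨1, 1, ut_one, isUnit_one, ut_one, isUnit_one, by simp⟩
  · intro f g h
    rw [rel_iff] at h ⊢
    obtain ⟨A, B, u1, u2, u3, u4, h⟩ := h
    refine ⟨A⁻¹, B⁻¹, ut_inv u1 u2, (Matrix.isUnit_nonsing_inv_iff).mpr u2,
      ut_inv u3 u4, (Matrix.isUnit_nonsing_inv_iff).mpr u4, ?_⟩
    rw [h]
    symm
    have hA := Matrix.nonsing_inv_mul A ((Matrix.isUnit_iff_isUnit_det A).mp u2)
    have hB := Matrix.mul_nonsing_inv B ((Matrix.isUnit_iff_isUnit_det B).mp u4)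
    calc A⁻¹ * (A * ↑f * B) * B⁻¹ = A⁻¹ * A * ↑f * (B * B⁻¹) := by
          noncomm_ring
      _ = ↑f := by rw [hA, hB, Matrix.one_mul, Matrix.mul_one]
  · intro f g k h1 h2
    rw [rel_iff] at h1 h2 ⊢
    obtain ⟨A, B, u1, u2, u3, u4, h⟩ := h1
    obtain ⟨A', B', v1, v2, v3, v4, h'⟩ := h2
    refine ⟨A' * A, B * B', ut_mul v1 u1, v2.mul u2, ut_mul u3 v3, u4.mul v4, ?_⟩
    rw [h', h]
    noncomm_ring

/-- Partial permutations with `i ≤ p i` (upper-triangular partial permutation matrices). -/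
def IsPP (p : Fin (n+1) → Option (Fin (n+1))) : Prop :=
  (∀ i j, p i = some j → (i : ℕ) ≤ (j : ℕ)) ∧
    (∀ i₁ i₂ j, p i₁ = some j → p i₂ = some j → i₁ = i₂)

/-- The matrix of a partial permutation. -/
def PMat (p : Fin (n+1) → Option (Fin (n+1))) : Mt n :=
  Matrix.of fun i j => if p i = some j then 1 else 0

lemma pmat_ut {p : Fin (n+1) → Option (Fin (n+1))} (hp : IsPP p) : UT n (PMat p) := by
  intro i j hij
  simp only [PMat, Matrix.of_apply, ite_eq_right_iff]
  intro h
  exact absurd (hp.1 i j h) (by omega)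

section Counting


/-- Strict "arc diagrams": partial injections with `i < p i`. -/
def IsArc {α : Type*} [LT α] (p : α → Option α) : Prop :=
  (∀ i j, p i = some j → i < j) ∧ ∀ i₁ i₂ j, p i₁ = some j → p i₂ = some j → i₁ = i₂

def ArcT (α : Type*) [LT α] := {p : α → Option α // IsArc p}

/-- Transport of arc diagrams along an order isomorphism. -/
def arcCongr {α β : Type*} [LinearOrder α] [LinearOrder β] (e : α ≃o β) :
    ArcT α ≃ ArcT β where
  toFun p := ⟨fun x => (p.1 (e.symm x)).map e, by
    constructor
    · intro i j h
      obtain ⟨a, ha, rfl⟩ := Option.map_eq_some_iff.mp h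
      have := p.2.1 _ _ ha
      calc i = e (e.symm i) := by simp
        _ < e a := by exact_mod_cast e.strictMono this
    · intro i₁ i₂ j h₁ h₂
      obtain ⟨a₁, ha₁, he₁⟩ := Option.map_eq_some_iff.mp h₁
      obtain ⟨a₂, ha₂, he₂⟩ := Option.map_eq_some_iff.mp h₂
      have : a₁ = a₂ := e.injective (by rw [he₁, he₂])
      subst this
      have := p.2.2 _ _ _ ha₁ ha₂
      have : e.symm i₁ = e.symm i₂ := this
      simpa using congrArg e this⟩
  invFun q := ⟨fun x => (q.1 (e x)).map e.symm, by
    constructor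
    · intro i j h
      obtain ⟨a, ha, rfl⟩ := Option.map_eq_some_iff.mp h
      have := q.2.1 _ _ ha
      calc i = e.symm (e i) := by simp
        _ < e.symm a := by exact_mod_cast e.symm.strictMono this
    · intro i₁ i₂ j h₁ h₂
      obtain ⟨a₁, ha₁, he₁⟩ := Option.map_eq_some_iff.mp h₁
      obtain ⟨a₂, ha₂, he₂⟩ := Option.map_eq_some_iff.mp h₂
      have : a₁ = a₂ := e.symm.injective (by rw [he₁, he₂])
      subst this
      have := q.2.2 _ _ _ ha₁ ha₂
      have : e i₁ = e i₂ := this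
      simpa using congrArg e.symm this⟩
  left_inv p := by
    apply Subtype.ext
    funext x
    cases hx : (p.1 x) <;> simp [hx]
  right_inv q := by
    apply Subtype.ext
    funext x
    cases hx : (q.1 x) <;> simp [hx]

/-- Number of arc diagrams on `Fin M`. -/
noncomputable def Anum (M : ℕ) : ℕ := Nat.card (ArcT (Fin M))

lemma card_arcT (α : Type*) [Fintype α] [LinearOrder α] :
    Nat.card (ArcT α) = Anum (Fintype.card α) :=
  (Nat.card_congr (arcCongr (monoEquivOfFin α rfl))).symm

lemma anum_zero : Anum 0 = 1 := by
  rw [Anum, Nat.card_eq_one_iff_unique]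
  refine ⟨⟨fun p q => Subtype.ext (funext fun x => x.elim0)⟩,
    ⟨fun _ => none, ⟨fun i j h => by simp at h, fun i₁ i₂ j h => by simp at h⟩⟩⟩


section Chain

variable {M : ℕ}

/-- Iterating the partial map starting from `0`. -/
def chain (p : Fin (M+1) → Option (Fin (M+1))) : ℕ → Option (Fin (M+1))
  | 0 => some 0
  | t+1 => (chain p t).bind p

variable {p : Fin (M+1) → Option (Fin (M+1))}

lemma chain_succ_elim {t : ℕ} {c : Fin (M+1)} (h : chain p (t+1) = some c) :
    ∃ a, chain p t = some a ∧ p a = some c :=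
  Option.bind_eq_some_iff.mp h

lemma chain_none {t u : ℕ} (h : chain p t = none) (htu : t ≤ u) : chain p u = none := by
  induction htu with
  | refl => exact h
  | step _ ih => rw [chain, ih]; rfl

lemma chain_lt (hp : IsArc p) :
    ∀ u c, chain p u = some c → ∀ t, t < u → ∃ a, chain p t = some a ∧ a < c := by
  intro u
  induction u with
  | zero => intro c _ t ht; omega
  | succ v ih =>
    intro c hc t ht
    obtain ⟨a, ha, hpa⟩ := chain_succ_elim hc
    have hac : a < c := hp.1 _ _ hpa
    rcases Nat.lt_succ_iff_lt_or_eq.mp ht with h | rfl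
    · obtain ⟨x, hx, hxa⟩ := ih a ha t h
      exact ⟨x, hx, hxa.trans hac⟩
    · exact ⟨a, ha, hac⟩

/-- The set of points reachable from `0`. -/
noncomputable def reach (p : Fin (M+1) → Option (Fin (M+1))) : Finset (Fin (M+1)) :=
  @Finset.filter _ (fun x => ∃ t, chain p t = some x) (Classical.decPred _) univ

lemma mem_reach {x : Fin (M+1)} : x ∈ reach p ↔ ∃ t, chain p t = some x := by
  rw [reach, @Finset.mem_filter _ _ (Classical.decPred _)]
  simp

lemma zero_mem_reach : (0 : Fin (M+1)) ∈ reach p := mem_reach.mpr ⟨0, rfl⟩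

lemma reach_next {x y : Fin (M+1)} (hx : x ∈ reach p) (hxy : p x = some y) :
    y ∈ reach p := by
  obtain ⟨t, ht⟩ := mem_reach.mp hx
  exact mem_reach.mpr ⟨t+1, by rw [chain, ht]; exact hxy⟩

lemma reach_prev (hp : IsArc p) {z x : Fin (M+1)} (hzx : p z = some x) (hx : x ∈ reach p) :
    z ∈ reach p := by
  obtain ⟨t, ht⟩ := mem_reach.mp hx
  match t, ht with
  | 0, ht =>
    have : x = 0 := (Option.some_injective _ ht).symm
    subst this
    exact absurd (hp.1 _ _ hzx) (Fin.not_lt_zero _)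
  | v+1, ht =>
    obtain ⟨a, ha, hpa⟩ := chain_succ_elim ht
    have : z = a := hp.2 _ _ _ hzx hpa
    exact mem_reach.mpr ⟨v, this ▸ ha⟩

lemma reach_gt (hp : IsArc p) {t u : ℕ} {x w : Fin (M+1)}
    (hx : chain p t = some x) (hw : chain p u = some w) (hxw : x < w) : t < u := by
  by_contra hle
  push_neg at hle
  rcases Nat.lt_or_ge u t with h | h
  · obtain ⟨a, ha, haw⟩ := chain_lt hp t x hx u h
    rw [ha] at hw
    cases Option.some_injective _ hw
    exact absurd hxw (asymm haw)
  · have : u = t := le_antisymm hle h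
    subst this
    rw [hx] at hw
    cases Option.some_injective _ hw
    exact lt_irrefl _ hxw

lemma reach_succ_min (hp : IsArc p) {t : ℕ} {x y : Fin (M+1)}
    (hx : chain p t = some x) (hy : p x = some y) :
    y ∈ reach p ∧ x < y ∧ ∀ w ∈ reach p, x < w → y ≤ w := by
  have hcy : chain p (t+1) = some y := by rw [chain, hx]; exact hy
  refine ⟨mem_reach.mpr ⟨t+1, hcy⟩, hp.1 _ _ hy, ?_⟩
  intro w hw hxw
  obtain ⟨u, hu⟩ := mem_reach.mp hw
  have htu : t < u := reach_gt hp hx hu hxw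
  rcases Nat.lt_or_ge (t+1) u with h | h
  · obtain ⟨a, ha, haw⟩ := chain_lt hp u w hu (t+1) h
    rw [hcy] at ha
    cases Option.some_injective _ ha
    exact le_of_lt haw
  · have : u = t + 1 := le_antisymm (by omega) (by omega)
    subst this
    rw [hcy] at hu
    cases Option.some_injective _ hu
    exact le_refl _

lemma reach_none_max (hp : IsArc p) {t : ℕ} {x : Fin (M+1)}
    (hx : chain p t = some x) (hn : p x = none) :
    ∀ w ∈ reach p, ¬ x < w := by
  intro w hw hxw
  obtain ⟨u, hu⟩ := mem_reach.mp hw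
  have htu : t < u := reach_gt hp hx hu hxw
  have : chain p (t+1) = none := by rw [chain, hx]; exact hn
  rw [chain_none this (by omega)] at hu
  exact nomatch hu

end Chain

section Fiber

variable {M : ℕ}

def sucEmb (M : ℕ) : Fin M ↪ Fin (M+1) := ⟨Fin.succ, Fin.succ_injective M⟩

def Sset (t : Finset (Fin M)) : Finset (Fin (M+1)) := insert 0 (t.map (sucEmb M))

lemma mem_Sset {t : Finset (Fin M)} {x : Fin (M+1)} :
    x ∈ Sset t ↔ x = 0 ∨ ∃ y ∈ t, Fin.succ y = x := by
  simp [Sset, sucEmb]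

lemma zero_mem_Sset {t : Finset (Fin M)} : (0 : Fin (M+1)) ∈ Sset t :=
  mem_Sset.mpr (Or.inl rfl)

lemma succ_mem_Sset {t : Finset (Fin M)} {y : Fin M} :
    Fin.succ y ∈ Sset t ↔ y ∈ t := by
  rw [mem_Sset]
  constructor
  · rintro (h | ⟨z, hz, hzy⟩)
    · exact absurd h (Fin.succ_ne_zero y)
    · rwa [← Fin.succ_injective M hzy]
  · intro h; exact Or.inr ⟨y, h, rfl⟩

lemma card_Sset (t : Finset (Fin M)) : (Sset t).card = t.card + 1 := by
  rw [Sset, Finset.card_insert_of_notMem, Finset.card_map]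
  simp only [Finset.mem_map]
  rintro ⟨y, _, hy⟩
  exact Fin.succ_ne_zero y hy

noncomputable def tset (p : Fin (M+1) → Option (Fin (M+1))) : Finset (Fin M) :=
  univ.filter (fun y => Fin.succ y ∈ reach p)

lemma mem_tset {p : Fin (M+1) → Option (Fin (M+1))} {y : Fin M} :
    y ∈ tset p ↔ Fin.succ y ∈ reach p := by simp [tset]

lemma Sset_tset {p : Fin (M+1) → Option (Fin (M+1))} : Sset (tset p) = reach p := by
  ext x
  induction x using Fin.cases with
  | zero => simp [zero_mem_Sset, zero_mem_reach]
  | succ y => rw [succ_mem_Sset, mem_tset]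

/-- The "next element of `Sset t`" partial map. -/
noncomputable def nxt (t : Finset (Fin M)) (x : Fin (M+1)) : Option (Fin (M+1)) :=
  if h : ((Sset t).filter (fun y => x < y)).Nonempty
    then some (((Sset t).filter (fun y => x < y)).min' h) else none

lemma nxt_eq_some {t : Finset (Fin M)} {x y : Fin (M+1)} (h : nxt t x = some y) :
    y ∈ Sset t ∧ x < y ∧ ∀ z ∈ Sset t, x < z → y ≤ z := by
  rw [nxt] at h
  split at h
  · rename_i hne
    cases Option.some_injective _ h
    have hm := Finset.min'_mem _ hne
    rw [Finset.mem_filter] at hm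
    exact ⟨hm.1, hm.2, fun z hz hxz => Finset.min'_le _ _ (Finset.mem_filter.mpr ⟨hz, hxz⟩)⟩
  · exact nomatch h

lemma nxt_eq_none {t : Finset (Fin M)} {x : Fin (M+1)} (h : nxt t x = none) :
    ∀ z ∈ Sset t, ¬ x < z := by
  rw [nxt] at h
  split at h
  · exact nomatch h
  · rename_i hne
    intro z hz hxz
    exact hne ⟨z, Finset.mem_filter.mpr ⟨hz, hxz⟩⟩

lemma nxt_spec_some {t : Finset (Fin M)} {x y : Fin (M+1)} (hy : y ∈ Sset t) (hxy : x < y)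
    (hmin : ∀ z ∈ Sset t, x < z → y ≤ z) : nxt t x = some y := by
  have hne : ((Sset t).filter (fun z => x < z)).Nonempty :=
    ⟨y, Finset.mem_filter.mpr ⟨hy, hxy⟩⟩
  rw [nxt, dif_pos hne]
  congr 1
  apply le_antisymm
  · exact Finset.min'_le _ _ (Finset.mem_filter.mpr ⟨hy, hxy⟩)
  · have hm := Finset.min'_mem _ hne
    rw [Finset.mem_filter] at hm
    exact hmin _ hm.1 hm.2

lemma nxt_spec_none {t : Finset (Fin M)} {x : Fin (M+1)}
    (h : ∀ z ∈ Sset t, ¬ x < z) : nxt t x = none := by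
  rw [nxt, dif_neg]
  rintro ⟨z, hz⟩
  rw [Finset.mem_filter] at hz
  exact h z hz.1 hz.2

/-- Glue an arc diagram on the complement of `Sset t` with the chain through `Sset t`. -/
noncomputable def consArc (t : Finset (Fin M))
    (q : {x : Fin (M+1) // x ∈ (Sset t)ᶜ} → Option {x : Fin (M+1) // x ∈ (Sset t)ᶜ}) :
    Fin (M+1) → Option (Fin (M+1)) :=
  fun x => if hx : x ∈ Sset t then nxt t x
    else Option.map (Subtype.val) (q ⟨x, Finset.mem_compl.mpr hx⟩)

lemma consArc_isArc {t : Finset (Fin M)}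
    {q : {x : Fin (M+1) // x ∈ (Sset t)ᶜ} → Option {x : Fin (M+1) // x ∈ (Sset t)ᶜ}}
    (hq : IsArc q) : IsArc (consArc t q) := by
  constructor
  · intro i j h
    rw [consArc] at h
    split at h
    · exact (nxt_eq_some h).2.1
    · obtain ⟨b, hb, rfl⟩ := Option.map_eq_some_iff.mp h
      exact Subtype.coe_lt_coe.mpr (hq.1 _ _ hb)
  · intro i₁ i₂ j h₁ h₂
    rw [consArc] at h₁ h₂
    split at h₁ <;> split at h₂
    · rename_i hi₁ hi₂
      obtain ⟨hj₁, hlt₁, hmin₁⟩ := nxt_eq_some h₁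
      obtain ⟨hj₂, hlt₂, hmin₂⟩ := nxt_eq_some h₂
      rcases lt_trichotomy i₁ i₂ with h | h | h
      · exact absurd (hmin₁ i₂ hi₂ h) (not_le.mpr hlt₂)
      · exact h
      · exact absurd (hmin₂ i₁ hi₁ h) (not_le.mpr hlt₁)
    · rename_i hi₂
      obtain ⟨b, hb, rfl⟩ := Option.map_eq_some_iff.mp h₂
      exact absurd (nxt_eq_some h₁).1 (Finset.mem_compl.mp b.2)
    · rename_i hi₁ _
      obtain ⟨b, hb, rfl⟩ := Option.map_eq_some_iff.mp h₁
      exact absurd (nxt_eq_some h₂).1 (Finset.mem_compl.mp b.2)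
    · obtain ⟨b₁, hb₁, he₁⟩ := Option.map_eq_some_iff.mp h₁
      obtain ⟨b₂, hb₂, he₂⟩ := Option.map_eq_some_iff.mp h₂
      have : b₁ = b₂ := Subtype.ext (he₁.trans he₂.symm)
      subst this
      have := hq.2 _ _ _ hb₁ hb₂
      exact congrArg Subtype.val this

lemma reach_consArc {t : Finset (Fin M)}
    {q : {x : Fin (M+1) // x ∈ (Sset t)ᶜ} → Option {x : Fin (M+1) // x ∈ (Sset t)ᶜ}} :
    reach (consArc t q) = Sset t := by
  have hsub : ∀ u x, chain (consArc t q) u = some x → x ∈ Sset t := by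
    intro u
    induction u with
    | zero =>
      intro x hx
      cases Option.some_injective _ hx
      exact zero_mem_Sset
    | succ v ih =>
      intro x hx
      obtain ⟨a, ha, hpa⟩ := chain_succ_elim hx
      have haS := ih a ha
      rw [consArc, dif_pos haS] at hpa
      exact (nxt_eq_some hpa).1
  apply Finset.Subset.antisymm
  · intro x hx
    obtain ⟨u, hu⟩ := mem_reach.mp hx
    exact hsub u x hu
  · intro x hx
    by_contra hxr
    set s := (Sset t).filter (fun z => z ∉ reach (consArc t q)) with hs
    have hsne : s.Nonempty := ⟨x, Finset.mem_filter.mpr ⟨hx, hxr⟩⟩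
    set x₀ := s.min' hsne with hx₀
    have hx₀s : x₀ ∈ s := Finset.min'_mem _ hsne
    rw [Finset.mem_filter] at hx₀s
    obtain ⟨hx₀S, hx₀r⟩ := hx₀s
    have hx₀0 : x₀ ≠ 0 := fun h => hx₀r (h ▸ zero_mem_reach)
    have hwne : ((Sset t).filter (fun z => z < x₀)).Nonempty :=
      ⟨0, Finset.mem_filter.mpr ⟨zero_mem_Sset, Fin.pos_of_ne_zero hx₀0⟩⟩
    set w := ((Sset t).filter (fun z => z < x₀)).max' hwne with hw
    have hwmem := Finset.max'_mem _ hwne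
    rw [Finset.mem_filter] at hwmem
    obtain ⟨hwS, hwlt⟩ := hwmem
    have hwreach : w ∈ reach (consArc t q) := by
      by_contra hwr
      have : w ∈ s := Finset.mem_filter.mpr ⟨hwS, hwr⟩
      exact absurd hwlt (not_lt.mpr (Finset.min'_le _ _ this))
    have hnxt : nxt t w = some x₀ := by
      apply nxt_spec_some hx₀S hwlt
      intro z hz hwz
      by_contra hzx
      push_neg at hzx
      have hzmem : z ∈ (Sset t).filter (fun z => z < x₀) := Finset.mem_filter.mpr ⟨hz, hzx⟩
      have : z ≤ w := Finset.le_max' _ _ hzmem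
      exact absurd hwz (not_lt.mpr this)
    have : consArc t q w = some x₀ := by rw [consArc, dif_pos hwS]; exact hnxt
    exact hx₀r (reach_next hwreach this)

/-- Restriction of an arc diagram to the complement of `Sset t`. -/
noncomputable def restrArc (t : Finset (Fin M)) (p : Fin (M+1) → Option (Fin (M+1))) :
    {x : Fin (M+1) // x ∈ (Sset t)ᶜ} → Option {x : Fin (M+1) // x ∈ (Sset t)ᶜ} :=
  fun x => (p ↑x).bind (fun y => if h : y ∈ (Sset t)ᶜ then some ⟨y, h⟩ else none)

lemma restrArc_isArc {t : Finset (Fin M)} {p : Fin (M+1) → Option (Fin (M+1))}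
    (hp : IsArc p) : IsArc (restrArc t p) := by
  constructor
  · intro i j h
    obtain ⟨y, hy, hf⟩ := Option.bind_eq_some_iff.mp h
    split at hf
    · cases Option.some_injective _ hf
      exact Subtype.mk_lt_mk.mpr (hp.1 _ _ hy)
    · exact nomatch hf
  · intro i₁ i₂ j h₁ h₂
    obtain ⟨y₁, hy₁, hf₁⟩ := Option.bind_eq_some_iff.mp h₁
    obtain ⟨y₂, hy₂, hf₂⟩ := Option.bind_eq_some_iff.mp h₂
    split at hf₁
    · split at hf₂
      · cases Option.some_injective _ hf₁
        cases Option.some_injective _ hf₂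
        exact Subtype.ext (hp.2 _ _ _ hy₁ hy₂)
      · exact nomatch hf₂
    · exact nomatch hf₁

lemma tset_consArc {t : Finset (Fin M)}
    {q : {x : Fin (M+1) // x ∈ (Sset t)ᶜ} → Option {x : Fin (M+1) // x ∈ (Sset t)ᶜ}} :
    tset (consArc t q) = t := by
  ext y
  rw [mem_tset, reach_consArc, succ_mem_Sset]

/-- The fiber of arc diagrams with given `tset` is equivalent to arc diagrams on the
complement. -/
noncomputable def fiberEquiv (t : Finset (Fin M)) :
    {p : ArcT (Fin (M+1)) // tset p.1 = t} ≃ ArcT {x : Fin (M+1) // x ∈ (Sset t)ᶜ} where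
  toFun P := ⟨restrArc t P.1.1, restrArc_isArc P.1.2⟩
  invFun q := ⟨⟨consArc t q.1, consArc_isArc q.2⟩, tset_consArc⟩
  left_inv := by
    rintro ⟨⟨p, hp⟩, ht⟩
    apply Subtype.ext
    apply Subtype.ext
    funext x
    have hS : Sset t = reach p := by rw [← ht, Sset_tset]
    show consArc t (restrArc t p) x = p x
    rw [consArc]
    split
    · rename_i hx
      rw [hS] at hx
      obtain ⟨t₀, ht₀⟩ := mem_reach.mp hx
      cases hpx : p x with
      | some y =>
        obtain ⟨hyr, hxy, hmin⟩ := reach_succ_min hp ht₀ hpx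
        exact nxt_spec_some (hS ▸ hyr) hxy (fun z hz hxz => hmin z (hS ▸ hz) hxz)
      | none =>
        exact nxt_spec_none (fun z hz hxz => reach_none_max hp ht₀ hpx z (hS ▸ hz) hxz)
    · rename_i hx
      show Option.map Subtype.val (restrArc t p ⟨x, _⟩) = p x
      cases hpx : p x with
      | none => rw [restrArc, hpx]; rfl
      | some y =>
        have hyn : y ∉ reach p := by
          intro hyr
          exact hx (hS ▸ reach_prev hp hpx hyr)
        have hyc : y ∈ (Sset t)ᶜ := Finset.mem_compl.mpr (fun hyS => hyn (hS ▸ hyS))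
        rw [restrArc, hpx, Option.bind_some, dif_pos hyc, Option.map_some]
  right_inv := by
    rintro ⟨q, hq⟩
    apply Subtype.ext
    funext x
    have hx : (x : Fin (M+1)) ∉ Sset t := Finset.mem_compl.mp x.2
    show restrArc t (consArc t q) x = q x
    rw [restrArc]
    have hcons : consArc t q ↑x = Option.map Subtype.val (q ⟨↑x, Finset.mem_compl.mpr hx⟩) := by
      rw [consArc, dif_neg hx]
    have hqx : q ⟨↑x, Finset.mem_compl.mpr hx⟩ = q x := rfl
    rw [hcons, hqx]
    cases hb : q x with
    | none => rfl
    | some b => rw [Option.map_some, Option.bind_some, dif_pos b.2]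

noncomputable def tsetA : ArcT (Fin (M+1)) → Finset (Fin M) := fun p => tset p.1

lemma card_compl_Sset (t : Finset (Fin M)) :
    Fintype.card {x : Fin (M+1) // x ∈ (Sset t)ᶜ} = M - t.card := by
  rw [Fintype.card_coe ((Sset t)ᶜ), Finset.card_compl, card_Sset]
  simp

lemma card_fiber (t : Finset (Fin M)) :
    Nat.card {p : ArcT (Fin (M+1)) // tsetA p = t} = Anum (M - t.card) := by
  unfold tsetA
  rw [Nat.card_congr (fiberEquiv t), card_arcT, card_compl_Sset]

instance : Finite (ArcT (Fin (M+1))) :=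
  (Subtype.finite : Finite {p : Fin (M+1) → Option (Fin (M+1)) // IsArc p})

lemma anum_succ (M : ℕ) : Anum (M+1) = ∑ k ∈ Finset.range (M+1), Nat.choose M k * Anum k := by
  classical
  have e := (Equiv.sigmaFiberEquiv (tsetA (M := M))).symm
  have h1 : Anum (M+1) = Nat.card (Σ t : Finset (Fin M), {p : ArcT (Fin (M+1)) // tsetA p = t}) :=
    Nat.card_congr e
  haveI : ∀ t : Finset (Fin M), Fintype {p : ArcT (Fin (M+1)) // tsetA p = t} :=
    fun t => Fintype.ofFinite _
  rw [h1, Nat.card_eq_fintype_card, Fintype.card_sigma]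
  have h2 : ∀ t : Finset (Fin M),
      Fintype.card {p : ArcT (Fin (M+1)) // tsetA p = t} = Anum (M - t.card) := by
    intro t
    rw [← Nat.card_eq_fintype_card, card_fiber]
  rw [Finset.sum_congr rfl (fun t _ => h2 t)]
  have h3 : ∑ t : Finset (Fin M), Anum (M - t.card)
      = ∑ j ∈ Finset.range (M+1), Nat.choose M j * Anum (M - j) := by
    rw [← Finset.powerset_univ, Finset.sum_powerset]
    rw [Finset.card_univ, Fintype.card_fin]
    refine Finset.sum_congr rfl fun j hj => ?_
    rw [Finset.sum_powersetCard j univ (fun k => Anum (M - k))]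
    rw [Finset.card_univ, Fintype.card_fin, smul_eq_mul]
  rw [h3]
  have h4 := Finset.sum_range_reflect (fun j => Nat.choose M j * Anum (M - j)) (M+1)
  rw [← h4]
  refine Finset.sum_congr rfl fun j hj => ?_
  rw [Finset.mem_range] at hj
  have hjM : j ≤ M := by omega
  have e1 : M + 1 - 1 - j = M - j := by omega
  have e2 : M - (M - j) = j := by omega
  rw [e1, Nat.choose_symm hjM, e2]

lemma anum_eq (b : ℕ → ℕ) (hb0 : b 0 = 1)
    (hb : ∀ m, b (m+1) = ∑ k ∈ Finset.range (m+1), Nat.choose m k * b k) :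
    ∀ M, Anum M = b M := by
  intro M
  induction M using Nat.strong_induction_on with
  | _ M ih =>
    match M with
    | 0 => rw [anum_zero, hb0]
    | (M+1) =>
      rw [anum_succ, hb M]
      exact Finset.sum_congr rfl fun k hk => by
        rw [ih k (by have := Finset.mem_range.mp hk; omega)]

end Fiber


end Counting

/-- Upper-triangular partial permutations on `Fin (n+1)` correspond to strict arc
diagrams on `Fin (n+2)`. -/
def ppToArc (p : Fin (n+1) → Option (Fin (n+1))) : Fin (n+1+1) → Option (Fin (n+1+1)) :=
  fun x => Fin.lastCases none (fun y => (p y).map Fin.succ) x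

def arcToPp (τ : Fin (n+1+1) → Option (Fin (n+1+1))) : Fin (n+1) → Option (Fin (n+1)) :=
  fun y => (τ y.castSucc).bind (fun j => if h : j = 0 then none else some (j.pred h))

def ppArcEquiv : {p : Fin (n+1) → Option (Fin (n+1)) // IsPP p} ≃ ArcT (Fin (n+1+1)) where
  toFun P := ⟨ppToArc P.1, by
    obtain ⟨p, hp⟩ := P
    constructor
    · intro x j h
      induction x using Fin.lastCases with
      | last => rw [ppToArc, Fin.lastCases_last] at h; exact nomatch h
      | cast y =>
        rw [ppToArc, Fin.lastCases_castSucc] at h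
        obtain ⟨a, ha, rfl⟩ := Option.map_eq_some_iff.mp h
        have := hp.1 _ _ ha
        rw [Fin.lt_def, Fin.coe_castSucc, Fin.val_succ]
        omega
    · intro x₁ x₂ j h₁ h₂
      induction x₁ using Fin.lastCases with
      | last => rw [ppToArc, Fin.lastCases_last] at h₁; exact nomatch h₁
      | cast y₁ =>
        induction x₂ using Fin.lastCases with
        | last => rw [ppToArc, Fin.lastCases_last] at h₂; exact nomatch h₂
        | cast y₂ =>
          rw [ppToArc, Fin.lastCases_castSucc] at h₁ h₂
          obtain ⟨a₁, ha₁, he₁⟩ := Option.map_eq_some_iff.mp h₁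
          obtain ⟨a₂, ha₂, he₂⟩ := Option.map_eq_some_iff.mp h₂
          have : a₁ = a₂ := by
            have := he₁.trans he₂.symm
            exact Fin.succ_inj.mp this
          subst this
          rw [hp.2 _ _ _ ha₁ ha₂]⟩
  invFun T := ⟨arcToPp T.1, by
    obtain ⟨τ, hτ⟩ := T
    constructor
    · intro y a h
      obtain ⟨j, hj, hd⟩ := Option.bind_eq_some_iff.mp h
      split at hd
      · exact nomatch hd
      · cases Option.some_injective _ hd
        have := hτ.1 _ _ hj
        rw [Fin.lt_def, Fin.coe_castSucc] at this
        rw [Fin.coe_pred]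
        omega
    · intro i₁ i₂ a h₁ h₂
      obtain ⟨j₁, hj₁, hd₁⟩ := Option.bind_eq_some_iff.mp h₁
      obtain ⟨j₂, hj₂, hd₂⟩ := Option.bind_eq_some_iff.mp h₂
      split at hd₁
      · exact nomatch hd₁
      split at hd₂
      · exact nomatch hd₂
      cases Option.some_injective _ hd₁
      have hj : j₁ = j₂ := by
        have e1 := congrArg Fin.val (Option.some_injective _ hd₂)
        rename_i hne1 hne2
        have v1 : (j₁ : ℕ) ≠ 0 := fun h => hne1 (Fin.ext h)
        have v2 : (j₂ : ℕ) ≠ 0 := fun h => hne2 (Fin.ext h)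
        rw [Fin.coe_pred, Fin.coe_pred] at e1
        apply Fin.ext
        omega
      subst hj
      have := hτ.2 _ _ _ hj₁ hj₂
      exact Fin.castSucc_injective _ this⟩
  left_inv := by
    rintro ⟨p, hp⟩
    apply Subtype.ext
    funext y
    show arcToPp (ppToArc p) y = p y
    rw [arcToPp, ppToArc, Fin.lastCases_castSucc]
    cases hpy : p y with
    | none => rfl
    | some a =>
      rw [Option.map_some, Option.bind_some, dif_neg (Fin.succ_ne_zero a), Fin.pred_succ]
  right_inv := by
    rintro ⟨τ, hτ⟩
    apply Subtype.ext
    funext x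
    show ppToArc (arcToPp τ) x = τ x
    induction x using Fin.lastCases with
    | last =>
      rw [ppToArc, Fin.lastCases_last]
      cases hτl : τ (Fin.last (n+1)) with
      | none => rfl
      | some j => exact absurd (hτ.1 _ _ hτl) (not_lt.mpr (Fin.le_last j))
    | cast y =>
      rw [ppToArc, Fin.lastCases_castSucc, arcToPp]
      cases hty : τ y.castSucc with
      | none => rfl
      | some j =>
        have hj0 : j ≠ 0 := by
          intro h
          subst h
          exact (Fin.not_lt_zero _) (hτ.1 _ _ hty)
        rw [Option.bind_some, dif_neg hj0, Option.map_some, Fin.succ_pred]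

section PartB

/-- Elementary column-operation matrix: adds multiples of column `j` to later columns. -/
def elemR (j : Fin (n+1)) (c : Fin (n+1) → ℂ) : Mt n :=
  1 + Matrix.of (fun r t => if r = j then c t else 0)

lemma elemR_ut {j : Fin (n+1)} {c : Fin (n+1) → ℂ} (hc : ∀ t, ¬ j < t → c t = 0) :
    UT n (elemR j c) := by
  intro r t htr
  rw [elemR, Matrix.add_apply, Matrix.of_apply]
  have h1 : (1 : Mt n) r t = 0 := Matrix.one_apply_ne (fun h => by subst h; omega)
  rw [h1, zero_add]
  split
  · rename_i h
    subst h
    exact hc t (by rw [Fin.not_lt]; rw [Fin.le_def]; omega)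
  · rfl

lemma elemR_diag {j : Fin (n+1)} {c : Fin (n+1) → ℂ} (hc : ∀ t, ¬ j < t → c t = 0)
    (r : Fin (n+1)) : elemR j c r r = 1 := by
  rw [elemR, Matrix.add_apply, Matrix.of_apply, Matrix.one_apply_eq]
  split
  · rename_i h
    subst h
    rw [hc r (lt_irrefl r), add_zero]
  · rw [add_zero]

lemma elemR_isUnit {j : Fin (n+1)} {c : Fin (n+1) → ℂ} (hc : ∀ t, ¬ j < t → c t = 0) :
    IsUnit (elemR j c) := by
  rw [Matrix.isUnit_iff_isUnit_det, ut_det (elemR_ut hc)]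
  have : ∀ r : Fin (n+1), elemR j c r r = 1 := elemR_diag hc
  rw [Finset.prod_congr rfl (fun r _ => this r), Finset.prod_const_one]
  exact isUnit_one

lemma mul_elemR (M : Mt n) (j : Fin (n+1)) (c : Fin (n+1) → ℂ) (r t : Fin (n+1)) :
    (M * elemR j c) r t = M r t + M r j * c t := by
  rw [elemR, Matrix.mul_add, Matrix.mul_one, Matrix.add_apply, Matrix.mul_apply]
  congr 1
  rw [Finset.sum_eq_single j]
  · rw [Matrix.of_apply, if_pos rfl]
  · intro k _ hk
    rw [Matrix.of_apply, if_neg hk, mul_zero]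
  · intro h
    exact absurd (Finset.mem_univ j) h

/-- Elementary row-operation matrix: adds multiples of row `i` to earlier rows, and
rescales row `i` by `e`. -/
def elemL (i : Fin (n+1)) (e : ℂ) (d : Fin (n+1) → ℂ) : Mt n :=
  Matrix.of (fun r k => if r = k then (if r = i then e else 1) else if k = i then d r else 0)

lemma elemL_ut {i : Fin (n+1)} {e : ℂ} {d : Fin (n+1) → ℂ} (hd : ∀ r, ¬ r < i → d r = 0) :
    UT n (elemL i e d) := by
  intro r k hkr
  rw [elemL, Matrix.of_apply]
  rw [if_neg (fun h => by subst h; omega)]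
  split
  · rename_i h
    subst h
    exact hd r (by rw [Fin.not_lt, Fin.le_def]; omega)
  · rfl

lemma elemL_isUnit {i : Fin (n+1)} {e : ℂ} {d : Fin (n+1) → ℂ} (he : e ≠ 0)
    (hd : ∀ r, ¬ r < i → d r = 0) : IsUnit (elemL i e d) := by
  rw [Matrix.isUnit_iff_isUnit_det, ut_det (elemL_ut hd)]
  have hdiag : ∀ r : Fin (n+1), elemL i e d r r = if r = i then e else 1 := by
    intro r
    rw [elemL, Matrix.of_apply, if_pos rfl]
  rw [Finset.prod_congr rfl (fun r _ => hdiag r), Finset.prod_ite_eq' Finset.univ i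
    (fun _ => e)]
  simp only [Finset.mem_univ, if_true]
  exact isUnit_iff_ne_zero.mpr he

lemma elemL_mul_ne {i r : Fin (n+1)} (hr : r ≠ i) (e : ℂ) (d : Fin (n+1) → ℂ) (M : Mt n)
    (t : Fin (n+1)) : (elemL i e d * M) r t = M r t + d r * M i t := by
  rw [Matrix.mul_apply]
  have hri : ({r, i} : Finset (Fin (n+1))) ⊆ Finset.univ := Finset.subset_univ _
  rw [← Finset.sum_subset hri]
  · rw [Finset.sum_pair hr, elemL, Matrix.of_apply, Matrix.of_apply,
      if_pos rfl, if_neg hr, if_neg hr, if_pos rfl, one_mul]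
  · intro k _ hk
    simp only [Finset.mem_insert, Finset.mem_singleton, not_or] at hk
    rw [elemL, Matrix.of_apply, if_neg (fun h => hk.1 h.symm), if_neg hk.2, zero_mul]

lemma elemL_mul_eq (i : Fin (n+1)) (e : ℂ) (d : Fin (n+1) → ℂ) (M : Mt n) (t : Fin (n+1)) :
    (elemL i e d * M) i t = e * M i t := by
  rw [Matrix.mul_apply]
  rw [Finset.sum_eq_single i]
  · rw [elemL, Matrix.of_apply, if_pos rfl, if_pos rfl]
  · intro k _ hk
    rw [elemL, Matrix.of_apply, if_neg (fun h => hk h.symm), if_neg hk, zero_mul]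
  · intro h
    exact absurd (Finset.mem_univ i) h

/-- Column `s` is "processed": it is zero, or it is a standard basis vector whose pivot row
is also cleared. -/
def ProcCol (M : Mt n) (s : Fin (n+1)) : Prop :=
  (∀ r, M r s = 0) ∨
    ∃ r, M r s = 1 ∧ (∀ r', r' ≠ r → M r' s = 0) ∧ (∀ t, t ≠ s → M r t = 0)

lemma step (M : Mt n) (hM : UT n M) (j : Fin (n+1)) (hprev : ∀ s, s < j → ProcCol M s) :
    ∃ A B : Mt n, UT n A ∧ IsUnit A ∧ UT n B ∧ IsUnit B ∧ UT n (A * M * B) ∧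
      ∀ s, s ≤ j → ProcCol (A * M * B) s := by
  classical
  by_cases hcol : ∀ r, M r j = 0
  · refine ⟨1, 1, ut_one, isUnit_one, ut_one, isUnit_one, ?_, ?_⟩
    · rw [Matrix.one_mul, Matrix.mul_one]; exact hM
    · rw [Matrix.one_mul, Matrix.mul_one]
      intro s hs
      rcases lt_or_eq_of_le hs with h | h
      · exact hprev s h
      · subst h; exact Or.inl hcol
  · push_neg at hcol
    obtain ⟨r₁, hr₁⟩ := hcol
    set F : Finset (Fin (n+1)) := Finset.univ.filter (fun r => M r j ≠ 0) with hF
    have hFne : F.Nonempty := ⟨r₁, by rw [hF, Finset.mem_filter]; exact ⟨Finset.mem_univ _, hr₁⟩⟩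
    set i₀ := F.max' hFne with hi₀
    have hi₀mem : i₀ ∈ F := Finset.max'_mem _ _
    have hine : M i₀ j ≠ 0 := by
      rw [hF, Finset.mem_filter] at hi₀mem; exact hi₀mem.2
    have hmax : ∀ r, M r j ≠ 0 → r ≤ i₀ := by
      intro r hr
      exact Finset.le_max' _ _ (by rw [hF, Finset.mem_filter]; exact ⟨Finset.mem_univ _, hr⟩)
    have hij : i₀ ≤ j := by
      rw [Fin.le_def]
      by_contra h
      exact hine (hM i₀ j (by omega))
    -- row i₀ is zero strictly left of column j
    have hrow_left : ∀ s, s < j → M i₀ s = 0 := by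
      intro s hs
      rcases hprev s hs with h | ⟨r₀, h1, h2, h3⟩
      · exact h i₀
      · by_cases hri : i₀ = r₀
        · subst hri
          exact absurd (h3 j (fun h => by subst h; exact absurd hs (lt_irrefl _))) hine
        · exact h2 i₀ hri
    -- pivot rows of earlier columns have zero in column j
    -- step 1 : clear row i₀ to the right of column j
    set c : Fin (n+1) → ℂ := fun t => if j < t then - M i₀ t / M i₀ j else 0 with hc
    have hcz : ∀ t, ¬ j < t → c t = 0 := by
      intro t ht; rw [hc]; exact if_neg ht
    set B := elemR j c with hB
    set M₁ := M * B with hM₁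
    have hM₁app : ∀ r t, M₁ r t = M r t + M r j * c t := fun r t => mul_elemR M j c r t
    have hM₁le : ∀ r t, ¬ j < t → M₁ r t = M r t := by
      intro r t ht
      rw [hM₁app, hcz t ht, mul_zero, add_zero]
    have hM₁j : ∀ r, M₁ r j = M r j := fun r => hM₁le r j (lt_irrefl j)
    have hM₁ut : UT n M₁ := ut_mul hM (elemR_ut hcz)
    have hM₁row : ∀ t, t ≠ j → M₁ i₀ t = 0 := by
      intro t ht
      by_cases hjt : j < t
      · rw [hM₁app, hc]
        simp only [if_pos hjt]
        field_simp
        ring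
      · rw [hM₁le _ _ hjt]
        exact hrow_left t (by
          rcases lt_trichotomy t j with h | h | h
          · exact h
          · exact absurd h ht
          · exact absurd h hjt)
    -- step 2 : clear column j above the pivot and rescale
    set d : Fin (n+1) → ℂ := fun r => if r < i₀ then - M r j / M i₀ j else 0 with hd
    have hdz : ∀ r, ¬ r < i₀ → d r = 0 := by
      intro r hr; rw [hd]; exact if_neg hr
    set A := elemL i₀ (M i₀ j)⁻¹ d with hA
    set M₂ := A * M₁ with hM₂
    have hM₂ne : ∀ r t, r ≠ i₀ → M₂ r t = M₁ r t + d r * M₁ i₀ t :=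
      fun r t hr => elemL_mul_ne hr _ d M₁ t
    have hM₂eq : ∀ t, M₂ i₀ t = (M i₀ j)⁻¹ * M₁ i₀ t :=
      fun t => elemL_mul_eq i₀ _ d M₁ t
    -- entries of M₂
    have hM₂col : ∀ r, M₂ r j = if r = i₀ then 1 else 0 := by
      intro r
      by_cases hr : r = i₀
      · subst hr
        rw [if_pos rfl, hM₂eq, hM₁j, inv_mul_cancel₀ hine]
      · rw [if_neg hr, hM₂ne r j hr, hM₁j, hM₁j, hd]
        by_cases hlt : r < i₀
        · simp only [if_pos hlt]
          field_simp
          ring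
        · simp only [if_neg hlt]
          have : M r j = 0 := by
            by_contra hc'
            have := hmax r hc'
            rcases lt_or_eq_of_le this with h | h
            · exact hlt h
            · exact hr h
          rw [this, zero_mul, add_zero]
    have hM₂row : ∀ t, t ≠ j → M₂ i₀ t = 0 := by
      intro t ht
      rw [hM₂eq, hM₁row t ht, mul_zero]
    have hM₂rest : ∀ r t, r ≠ i₀ → t ≠ j → M₂ r t = M₁ r t := by
      intro r t hr ht
      rw [hM₂ne r t hr, hM₁row t ht, mul_zero, add_zero]
    have hM₂ut : UT n M₂ := ut_mul (elemL_ut hdz) hM₁ut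
    -- earlier columns are unchanged
    have hM₂early : ∀ r s, s < j → M₂ r s = M r s := by
      intro r s hs
      have hsj : s ≠ j := fun h => by subst h; exact lt_irrefl _ hs
      by_cases hr : r = i₀
      · subst hr
        rw [hM₂row s hsj, hrow_left s hs]
      · rw [hM₂rest r s hr hsj, hM₁le r s (by
          rw [Fin.not_lt]
          rw [Fin.lt_def] at hs
          rw [Fin.le_def]
          omega)]
    refine ⟨A, B, elemL_ut hdz, elemL_isUnit (inv_ne_zero hine) hdz,
      elemR_ut hcz, elemR_isUnit hcz, ?_, ?_⟩
    · have : A * M * B = M₂ := by rw [hM₂, hM₁]; noncomm_ring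
      rw [this]; exact hM₂ut
    · have hABM : A * M * B = M₂ := by rw [hM₂, hM₁]; noncomm_ring
      rw [hABM]
      intro s hs
      rcases lt_or_eq_of_le hs with hlt | heq
      · -- earlier column: transfer ProcCol from M
        rcases hprev s hlt with h | ⟨r₀, h1, h2, h3⟩
        · left
          intro r
          rw [hM₂early r s hlt]
          exact h r
        · right
          have hr₀i : r₀ ≠ i₀ := by
            intro h
            subst h
            exact hine (h3 j (fun hh => by subst hh; exact lt_irrefl _ hlt))
          refine ⟨r₀, ?_, ?_, ?_⟩
          · rw [hM₂early r₀ s hlt]; exact h1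
          · intro r' hr'
            rw [hM₂early r' s hlt]; exact h2 r' hr'
          · intro t ht
            by_cases htj : t = j
            · subst htj
              rw [hM₂col, if_neg hr₀i]
            · rw [hM₂rest r₀ t hr₀i htj, hM₁app, h3 t ht, h3 j (fun hh => by
                subst hh; exact lt_irrefl _ hlt), zero_mul, add_zero]
      · subst heq
        right
        refine ⟨i₀, ?_, ?_, ?_⟩
        · rw [hM₂col, if_pos rfl]
        · intro r' hr'
          rw [hM₂col, if_neg hr']
        · intro t ht
          exact hM₂row t ht

lemma reduce : ∀ (k : ℕ), k ≤ n+1 → ∀ M : Mt n, UT n M →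
    ∃ A B : Mt n, UT n A ∧ IsUnit A ∧ UT n B ∧ IsUnit B ∧ UT n (A * M * B) ∧
      ∀ s : Fin (n+1), (s : ℕ) < k → ProcCol (A * M * B) s := by
  intro k
  induction k with
  | zero =>
    intro _ M hM
    refine ⟨1, 1, ut_one, isUnit_one, ut_one, isUnit_one, ?_, ?_⟩
    · rw [Matrix.one_mul, Matrix.mul_one]; exact hM
    · intro s hs; omega
  | succ k ih =>
    intro hk M hM
    obtain ⟨A, B, hA, hAu, hB, hBu, hut, hproc⟩ := ih (by omega) M hM
    set j : Fin (n+1) := ⟨k, by omega⟩ with hj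
    have hjv : (j : ℕ) = k := rfl
    obtain ⟨A', B', hA', hAu', hB', hBu', hut', hproc'⟩ := step (A * M * B) hut j
      (fun s hs => hproc s (by rw [Fin.lt_def] at hs; omega))
    refine ⟨A' * A, B * B', ut_mul hA' hA, hAu'.mul hAu, ut_mul hB hB',
      hBu.mul hBu', ?_, ?_⟩
    · have : A' * A * M * (B * B') = A' * (A * M * B) * B' := by noncomm_ring
      rw [this]; exact hut'
    · have : A' * A * M * (B * B') = A' * (A * M * B) * B' := by noncomm_ring
      rw [this]
      intro s hs
      apply hproc' s
      rw [Fin.le_def]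
      omega

lemma pivot_of_ne {M : Mt n} (hall : ∀ s, ProcCol M s) {r s : Fin (n+1)} (hne : M r s ≠ 0) :
    M r s = 1 ∧ (∀ r', r' ≠ r → M r' s = 0) ∧ (∀ t, t ≠ s → M r t = 0) := by
  rcases hall s with h | ⟨r₀, h1, h2, h3⟩
  · exact absurd (h r) hne
  · have : r = r₀ := by
      by_contra hc
      exact hne (h2 r hc)
    subst this
    exact ⟨h1, h2, h3⟩

lemma toPP (M : Mt n) (hM : UT n M) (hall : ∀ s, ProcCol M s) :
    ∃ p, IsPP p ∧ PMat p = M := by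
  classical
  set p : Fin (n+1) → Option (Fin (n+1)) :=
    fun r => if h : ∃ s, M r s ≠ 0 then some h.choose else none with hp
  have hpspec : ∀ r s₀, p r = some s₀ → M r s₀ ≠ 0 := by
    intro r s₀ hs₀
    simp only [hp] at hs₀
    split at hs₀
    · rename_i h
      cases Option.some_injective _ hs₀
      exact h.choose_spec
    · exact nomatch hs₀
  have hpnone : ∀ r, p r = none → ∀ s, M r s = 0 := by
    intro r hr s
    simp only [hp] at hr
    split at hr
    · exact nomatch hr
    · rename_i h
      push_neg at h
      exact h s
  have hpsome : ∀ r, (∃ s, M r s ≠ 0) → ∃ s₀, p r = some s₀ := by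
    intro r h
    simp only [hp]
    rw [dif_pos h]
    exact ⟨h.choose, rfl⟩
  constructor
  constructor
  · constructor
    · intro r s₀ hs₀
      have := hpspec r s₀ hs₀
      by_contra hc
      exact this (hM r s₀ (by omega))
    · intro r₁ r₂ s₀ h₁ h₂
      have hne₁ := hpspec _ _ h₁
      have hne₂ := hpspec _ _ h₂
      obtain ⟨-, hcol, -⟩ := pivot_of_ne hall hne₁
      by_contra hc
      exact hne₂ (hcol r₂ (fun h => hc h.symm))
  · ext r t
    rw [PMat, Matrix.of_apply]
    cases hpr : p r with
    | none =>
      rw [if_neg (Option.some_ne_none t).symm]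
      exact (hpnone r hpr t).symm
    | some s₀ =>
      have hne := hpspec _ _ hpr
      obtain ⟨h1, -, h3⟩ := pivot_of_ne hall hne
      by_cases ht : t = s₀
      · subst ht
        rw [if_pos rfl]
        exact h1.symm
      · rw [if_neg (fun h => ht (Option.some_injective _ h).symm)]
        exact (h3 t ht).symm

end PartB

lemma partB (f : {M : Mt n // UT n M}) :
    ∃ p, ∃ hp : IsPP p, Rel n f ⟨PMat p, pmat_ut hp⟩ := by
  obtain ⟨M, hM⟩ := f
  obtain ⟨A, B, hA, hAu, hB, hBu, hut, hproc⟩ := reduce (n+1) (le_refl _) M hM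
  have hall : ∀ s, ProcCol (A * M * B) s := fun s => hproc s s.isLt
  obtain ⟨p, hpp, hpm⟩ := toPP (A * M * B) hut hall
  refine ⟨p, hpp, ?_⟩
  rw [rel_iff]
  exact ⟨A, B, hA, hAu, hB, hBu, hpm⟩

section PartC

/-- Rank of the submatrix on rows `≥ i` and columns `≤ j`. -/
noncomputable def subRank (M : Mt n) (i j : Fin (n+1)) : ℕ :=
  (M.submatrix (fun r : {r : Fin (n+1) // i ≤ r} => (r : Fin (n+1)))
    (fun s : {s : Fin (n+1) // s ≤ j} => (s : Fin (n+1)))).rank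

lemma sum_restrict_le {j : Fin (n+1)} (h : Fin (n+1) → ℂ) (hv : ∀ l, ¬ l ≤ j → h l = 0) :
    ∑ l : Fin (n+1), h l = ∑ l : {s : Fin (n+1) // s ≤ j}, h ↑l := by
  classical
  rw [← Finset.sum_subtype (Finset.univ.filter (fun s => s ≤ j)) (fun x => by simp) h]
  exact (Finset.sum_subset (Finset.filter_subset _ _)
    (fun x _ hx => hv x (by simpa using hx))).symm

lemma sum_restrict_ge {i : Fin (n+1)} (h : Fin (n+1) → ℂ) (hv : ∀ k, ¬ i ≤ k → h k = 0) :
    ∑ k : Fin (n+1), h k = ∑ k : {r : Fin (n+1) // i ≤ r}, h ↑k := by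
  classical
  rw [← Finset.sum_subtype (Finset.univ.filter (fun r => i ≤ r)) (fun x => by simp) h]
  exact (Finset.sum_subset (Finset.filter_subset _ _)
    (fun x _ hx => hv x (by simpa using hx))).symm

lemma submatrix_mul_mul (A M B : Mt n) (hA : UT n A) (hB : UT n B) (i j : Fin (n+1)) :
    (A * M * B).submatrix (fun r : {r : Fin (n+1) // i ≤ r} => (r : Fin (n+1)))
        (fun s : {s : Fin (n+1) // s ≤ j} => (s : Fin (n+1)))
      = (A.submatrix (fun r : {r : Fin (n+1) // i ≤ r} => (r : Fin (n+1)))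
            (fun r : {r : Fin (n+1) // i ≤ r} => (r : Fin (n+1))))
        * (M.submatrix (fun r : {r : Fin (n+1) // i ≤ r} => (r : Fin (n+1)))
            (fun s : {s : Fin (n+1) // s ≤ j} => (s : Fin (n+1))))
        * (B.submatrix (fun s : {s : Fin (n+1) // s ≤ j} => (s : Fin (n+1)))
            (fun s : {s : Fin (n+1) // s ≤ j} => (s : Fin (n+1)))) := by
  ext r s
  rw [Matrix.submatrix_apply, Matrix.mul_apply, Matrix.mul_apply]
  have step1 : ∑ l : Fin (n+1), (A * M) (↑r) l * B l ↑s
      = ∑ l : {s : Fin (n+1) // s ≤ j}, (A * M) (↑r) ↑l * B ↑l ↑s := by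
    apply sum_restrict_le
    intro l hl
    have hBl : B l ↑s = 0 := by
      apply hB
      have h1 : (s : Fin (n+1)) ≤ j := s.2
      rw [Fin.le_def] at h1
      rw [Fin.not_le, Fin.lt_def] at hl
      omega
    rw [hBl, mul_zero]
  rw [step1]
  apply Finset.sum_congr rfl
  intro l _
  congr 1
  rw [Matrix.mul_apply, Matrix.mul_apply]
  apply sum_restrict_ge
  intro k hk
  have hAk : A (↑r) k = 0 := by
    apply hA
    have h1 : i ≤ (r : Fin (n+1)) := r.2
    rw [Fin.le_def] at h1
    rw [Fin.not_le, Fin.lt_def] at hk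
    omega
  rw [hAk, zero_mul]

lemma diag_ne_zero {M : Mt n} (hM : UT n M) (hu : IsUnit M) : ∀ r, M r r ≠ 0 := by
  have hd : IsUnit M.det := (Matrix.isUnit_iff_isUnit_det M).mp hu
  rw [ut_det hM, isUnit_iff_ne_zero] at hd
  intro r
  exact fun h => hd (Finset.prod_eq_zero (Finset.mem_univ r) h)

lemma isUnit_submatrix {κ : Type*} [Fintype κ] [LinearOrder κ] [DecidableEq κ]
    {A : Mt n} (hA : UT n A) (hu : IsUnit A)
    (f : κ → Fin (n+1)) (hf : StrictMono f) : IsUnit (A.submatrix f f) := by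
  have hbt : (A.submatrix f f).BlockTriangular id := by
    intro a b hab
    have : f b < f a := hf hab
    rw [Fin.lt_def] at this
    exact hA (f a) (f b) this
  rw [Matrix.isUnit_iff_isUnit_det, Matrix.det_of_upperTriangular hbt, isUnit_iff_ne_zero]
  exact Finset.prod_ne_zero_iff.mpr (fun a _ => diag_ne_zero hA hu (f a))

lemma subRank_invariant {A M B : Mt n} (hA : UT n A) (hAu : IsUnit A)
    (hB : UT n B) (hBu : IsUnit B) (i j : Fin (n+1)) :
    subRank (A * M * B) i j = subRank M i j := by
  unfold subRank
  rw [submatrix_mul_mul A M B hA hB i j]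
  have hAs : IsUnit (A.submatrix (fun r : {r : Fin (n+1) // i ≤ r} => (r : Fin (n+1)))
      (fun r : {r : Fin (n+1) // i ≤ r} => (r : Fin (n+1)))) :=
    isUnit_submatrix hA hAu _ (fun a b h => Subtype.coe_lt_coe.mpr h)
  have hBs : IsUnit (B.submatrix (fun s : {s : Fin (n+1) // s ≤ j} => (s : Fin (n+1)))
      (fun s : {s : Fin (n+1) // s ≤ j} => (s : Fin (n+1)))) :=
    isUnit_submatrix hB hBu _ (fun a b h => Subtype.coe_lt_coe.mpr h)
  rw [Matrix.rank_mul_eq_left_of_isUnit_det _ _ ((Matrix.isUnit_iff_isUnit_det _).mp hBs)]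
  rw [Matrix.rank_mul_eq_right_of_isUnit_det _ _ ((Matrix.isUnit_iff_isUnit_det _).mp hAs)]

/-- Number of pivots of `p` in rows `≥ a` and columns `≤ j`. -/
def cnt (p : Fin (n+1) → Option (Fin (n+1))) (a : ℕ) (j : Fin (n+1)) : ℕ :=
  (Finset.univ.filter (fun r : Fin (n+1) => a ≤ (r : ℕ) ∧ ∃ s, p r = some s ∧ s ≤ j)).card

lemma col_eq_single {p : Fin (n+1) → Option (Fin (n+1))} (hp : IsPP p) {i j : Fin (n+1)}
    {r₀ : {r : Fin (n+1) // i ≤ r}} {s : {s : Fin (n+1) // s ≤ j}}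
    (h : p ↑r₀ = some ↑s) :
    (((PMat p).submatrix (fun r : {r : Fin (n+1) // i ≤ r} => (r : Fin (n+1)))
      (fun s : {s : Fin (n+1) // s ≤ j} => (s : Fin (n+1))))ᵀ) s = Pi.single r₀ 1 := by
  classical
  funext r
  rw [Matrix.transpose_apply, Matrix.submatrix_apply]
  simp only [PMat, Matrix.of_apply]
  by_cases hr : r = r₀
  · subst hr
    rw [if_pos h, Pi.single_eq_same]
  · have : p ↑r ≠ some ↑s := by
      intro hc
      exact hr (Subtype.ext (hp.2 _ _ _ hc h))
    rw [if_neg this, Pi.single_eq_of_ne hr]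

lemma col_eq_zero {p : Fin (n+1) → Option (Fin (n+1))} {i j : Fin (n+1)}
    {s : {s : Fin (n+1) // s ≤ j}}
    (h : ∀ r : {r : Fin (n+1) // i ≤ r}, p ↑r ≠ some ↑s) :
    (((PMat p).submatrix (fun r : {r : Fin (n+1) // i ≤ r} => (r : Fin (n+1)))
      (fun s : {s : Fin (n+1) // s ≤ j} => (s : Fin (n+1))))ᵀ) s = 0 := by
  funext r
  rw [Matrix.transpose_apply, Matrix.submatrix_apply]
  simp only [PMat, Matrix.of_apply]
  rw [if_neg (h r)]
  rfl

lemma single_injective_R {κ : Type*} [DecidableEq κ] :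
    Function.Injective (fun r : κ => Pi.single r (1:ℂ)) := by
  intro a b h
  have h1 := congrFun h a
  simp only [Pi.single_apply] at h1
  by_contra hab
  rw [if_neg hab] at h1
  simp at h1

lemma subRank_pmat {p : Fin (n+1) → Option (Fin (n+1))} (hp : IsPP p) (i j : Fin (n+1)) :
    subRank (PMat p) i j = cnt p (i : ℕ) j := by
  classical
  unfold subRank
  rw [Matrix.rank_eq_finrank_span_cols]
  set K : Finset {r : Fin (n+1) // i ≤ r} :=
    Finset.univ.filter (fun r => ∃ s, p ↑r = some s ∧ s ≤ j) with hK
  set V : Finset ({r : Fin (n+1) // i ≤ r} → ℂ) :=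
    K.image (fun r => Pi.single r 1) with hV
  have hspan : Submodule.span ℂ (Set.range
      (((PMat p).submatrix (fun r : {r : Fin (n+1) // i ≤ r} => (r : Fin (n+1)))
        (fun s : {s : Fin (n+1) // s ≤ j} => (s : Fin (n+1))))ᵀ))
      = Submodule.span ℂ (V : Set _) := by
    apply le_antisymm
    · rw [Submodule.span_le]
      rintro v ⟨s, rfl⟩
      by_cases h : ∃ r : {r : Fin (n+1) // i ≤ r}, p ↑r = some ↑s
      · obtain ⟨r₀, hr₀⟩ := h
        rw [col_eq_single hp hr₀]
        apply Submodule.subset_span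
        rw [hV]
        simp only [Finset.coe_image, Set.mem_image, Finset.mem_coe]
        refine ⟨r₀, ?_, rfl⟩
        rw [hK, Finset.mem_filter]
        exact ⟨Finset.mem_univ _, ↑s, hr₀, s.2⟩
      · push_neg at h
        rw [col_eq_zero h]
        exact Submodule.zero_mem _
    · rw [Submodule.span_le]
      intro v hv
      rw [hV] at hv
      simp only [Finset.coe_image, Set.mem_image, Finset.mem_coe] at hv
      obtain ⟨r₀, hr₀K, rfl⟩ := hv
      rw [hK, Finset.mem_filter] at hr₀K
      obtain ⟨-, s₀, hps₀, hs₀⟩ := hr₀K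
      apply Submodule.subset_span
      exact ⟨⟨s₀, hs₀⟩, col_eq_single hp hps₀⟩
  change Module.finrank ℂ (Submodule.span ℂ (Set.range
      (((PMat p).submatrix (fun r : {r : Fin (n+1) // i ≤ r} => (r : Fin (n+1)))
        (fun s : {s : Fin (n+1) // s ≤ j} => (s : Fin (n+1))))ᵀ))) = _
  rw [hspan]
  have hli : LinearIndependent ℂ
      (Subtype.val : {x // x ∈ (V : Set ({r : Fin (n+1) // i ≤ r} → ℂ))}
        → ({r : Fin (n+1) // i ≤ r} → ℂ)) := by
    have h1 := (Pi.basisFun ℂ {r : Fin (n+1) // i ≤ r}).linearIndependent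
    have h2 : LinearIndependent ℂ (fun r : {r : Fin (n+1) // i ≤ r} => Pi.single r (1:ℂ)) := by
      have : ⇑(Pi.basisFun ℂ {r : Fin (n+1) // i ≤ r})
          = fun r : {r : Fin (n+1) // i ≤ r} => Pi.single r (1:ℂ) := by
        funext r
        exact Pi.basisFun_apply ℂ _ r
      rwa [this] at h1
    have mono' : ∀ {t s : Set ({r : Fin (n+1) // i ≤ r} → ℂ)}, t ⊆ s →
        LinearIndepOn ℂ id s → LinearIndepOn ℂ id t := fun h hs => hs.mono h
    apply mono' (t := (V : Set _))
      (s := Set.range (fun r : {r : Fin (n+1) // i ≤ r} => Pi.single r (1:ℂ)))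
    · intro v hv
      rw [hV] at hv
      simp only [Finset.coe_image, Set.mem_image, Finset.mem_coe] at hv
      obtain ⟨r₀, _, rfl⟩ := hv
      exact ⟨r₀, rfl⟩
    · exact (linearIndepOn_id_range_iff single_injective_R).mpr h2
  rw [finrank_span_finset_eq_card hli, hV,
    Finset.card_image_of_injective _ single_injective_R]
  rw [hK, cnt]
  apply Finset.card_bij (fun (r : {r : Fin (n+1) // i ≤ r}) _ => (r : Fin (n+1)))
  · rintro a ha
    rw [Finset.mem_filter] at ha ⊢
    refine ⟨Finset.mem_univ _, ?_, ha.2⟩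
    have := a.2
    rwa [Fin.le_def] at this
  · intro a _ b _ h
    exact Subtype.ext h
  · intro b hb
    rw [Finset.mem_filter] at hb
    obtain ⟨-, hab, hPb⟩ := hb
    exact ⟨⟨b, by rwa [Fin.le_def]⟩, by rw [Finset.mem_filter]; exact ⟨Finset.mem_univ _, hPb⟩, rfl⟩

lemma cnt_large {p : Fin (n+1) → Option (Fin (n+1))} {a : ℕ} (ha : n < a) (j : Fin (n+1)) :
    cnt p a j = 0 := by
  rw [cnt, Finset.card_eq_zero]
  apply Finset.filter_false_of_mem
  intro r _
  rintro ⟨h1, -⟩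
  have := r.2
  omega

lemma cnt_succ (p : Fin (n+1) → Option (Fin (n+1))) (a : Fin (n+1)) (j : Fin (n+1)) :
    cnt p (a : ℕ) j = cnt p ((a : ℕ)+1) j
      + (if ∃ s, p a = some s ∧ s ≤ j then 1 else 0) := by
  classical
  rw [cnt, cnt]
  have hsplit : Finset.univ.filter
        (fun r : Fin (n+1) => (a : ℕ) ≤ (r : ℕ) ∧ ∃ s, p r = some s ∧ s ≤ j)
      = Finset.univ.filter
          (fun r : Fin (n+1) => (a : ℕ)+1 ≤ (r : ℕ) ∧ ∃ s, p r = some s ∧ s ≤ j)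
        ∪ Finset.univ.filter (fun r : Fin (n+1) => r = a ∧ ∃ s, p r = some s ∧ s ≤ j) := by
    ext r
    simp only [Finset.mem_filter, Finset.mem_union, Finset.mem_univ, true_and]
    constructor
    · rintro ⟨h1, h2⟩
      rcases Nat.lt_or_ge (a : ℕ) (r : ℕ) with h | h
      · exact Or.inl ⟨by omega, h2⟩
      · exact Or.inr ⟨Fin.ext (by omega), h2⟩
    · rintro (⟨h1, h2⟩ | ⟨rfl, h2⟩)
      · exact ⟨by omega, h2⟩
      · exact ⟨le_refl _, h2⟩
  rw [hsplit, Finset.card_union_of_disjoint]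
  · congr 1
    by_cases hP : ∃ s, p a = some s ∧ s ≤ j
    · rw [if_pos hP]
      have : Finset.univ.filter (fun r : Fin (n+1) => r = a ∧ ∃ s, p r = some s ∧ s ≤ j)
          = {a} := by
        ext r
        simp only [Finset.mem_filter, Finset.mem_univ, true_and, Finset.mem_singleton]
        constructor
        · rintro ⟨rfl, -⟩; rfl
        · rintro rfl; exact ⟨rfl, hP⟩
      rw [this, Finset.card_singleton]
    · rw [if_neg hP]
      have : Finset.univ.filter (fun r : Fin (n+1) => r = a ∧ ∃ s, p r = some s ∧ s ≤ j)
          = ∅ := by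
        ext r
        simp only [Finset.mem_filter, Finset.mem_univ, true_and, Finset.notMem_empty,
          iff_false, not_and]
        rintro rfl
        exact hP
      rw [this, Finset.card_empty]
  · rw [Finset.disjoint_left]
    intro r hr1 hr2
    rw [Finset.mem_filter] at hr1 hr2
    obtain ⟨-, h1, -⟩ := hr1
    obtain ⟨-, rfl, -⟩ := hr2
    omega

lemma cnt_eq_imp {p q : Fin (n+1) → Option (Fin (n+1))}
    (H : ∀ (i j : Fin (n+1)), cnt p (i : ℕ) j = cnt q (i : ℕ) j) : p = q := by
  have HN : ∀ (a : ℕ) (j : Fin (n+1)), cnt p a j = cnt q a j := by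
    intro a j
    rcases le_or_gt a n with h | h
    · have := H ⟨a, by omega⟩ j
      simpa using this
    · rw [cnt_large h, cnt_large h]
  have Hind : ∀ (r : Fin (n+1)) (j : Fin (n+1)),
      (∃ s, p r = some s ∧ s ≤ j) ↔ (∃ s, q r = some s ∧ s ≤ j) := by
    intro r j
    have h1 := cnt_succ p r j
    have h2 := cnt_succ q r j
    have h3 := HN (r : ℕ) j
    have h4 := HN ((r : ℕ)+1) j
    constructor
    · intro hP
      by_contra hQ
      rw [if_pos hP] at h1
      rw [if_neg hQ] at h2
      omega
    · intro hQ
      by_contra hP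
      rw [if_neg hP] at h1
      rw [if_pos hQ] at h2
      omega
  funext r
  cases hp : p r with
  | none =>
    cases hq : q r with
    | none => rfl
    | some s =>
      obtain ⟨s', hs', -⟩ := (Hind r (Fin.last n)).mpr ⟨s, hq, Fin.le_last s⟩
      rw [hp] at hs'
      exact nomatch hs'
  | some s =>
    cases hq : q r with
    | none =>
      obtain ⟨s', hs', -⟩ := (Hind r (Fin.last n)).mp ⟨s, hp, Fin.le_last s⟩
      rw [hq] at hs'
      exact nomatch hs'
    | some s' =>
      obtain ⟨s₁, hs₁, hs₁le⟩ := (Hind r s).mp ⟨s, hp, le_refl s⟩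
      rw [hq] at hs₁
      have e1 : s' = s₁ := Option.some_injective _ hs₁
      obtain ⟨s₂, hs₂, hs₂le⟩ := (Hind r s').mpr ⟨s', hq, le_refl _⟩
      rw [hp] at hs₂
      have e2 : s = s₂ := Option.some_injective _ hs₂
      have hle1 : s' ≤ s := e1 ▸ hs₁le
      have hle2 : s ≤ s' := e2 ▸ hs₂le
      rw [le_antisymm hle2 hle1]

end PartC

lemma partC {p q : Fin (n+1) → Option (Fin (n+1))} (hp : IsPP p) (hq : IsPP q)
    (h : Rel n ⟨PMat p, pmat_ut hp⟩ ⟨PMat q, pmat_ut hq⟩) : p = q := by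
  rw [rel_iff] at h
  obtain ⟨A, B, u1, u2, u3, u4, h⟩ := h
  apply cnt_eq_imp
  intro i j
  rw [← subRank_pmat hp i j, ← subRank_pmat hq i j]
  have : (PMat q : Mt n) = A * PMat p * B := h
  rw [this, subRank_invariant u1 u2 u3 u4]

lemma partD (b : ℕ → ℕ) (hb0 : b 0 = 1)
    (hb : ∀ m, b (m+1) = ∑ k ∈ Finset.range (m+1), Nat.choose m k * b k) :
    Nat.card {p : Fin (n+1) → Option (Fin (n+1)) // IsPP p} = b (n + 2) := by
  rw [Nat.card_congr (ppArcEquiv (n := n))]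
  have : Nat.card (ArcT (Fin (n+1+1))) = Anum (n+2) := rfl
  rw [this, anum_eq b hb0 hb]

end Stmt6

theorem stmt6 (n : ℕ) (b : ℕ → ℕ) (hb0 : b 0 = 1)
    (hb : ∀ m, b (m+1) = ∑ k ∈ Finset.range (m+1), Nat.choose m k * b k) :
    Nat.card (Quot (fun f g : {M : Matrix (Fin (n+1)) (Fin (n+1)) ℂ // UT n M} =>
      ∃ h₁ h₂ : Matrix (Fin (n+1)) (Fin (n+1)) ℂ,
        UT n h₁ ∧ IsUnit h₁ ∧ UT n h₂ ∧ IsUnit h₂ ∧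
          (g : Matrix (Fin (n+1)) (Fin (n+1)) ℂ) = h₂ * (f : Matrix (Fin (n+1)) (Fin (n+1)) ℂ) * h₁⁻¹))
      = b (n + 2) := by
  classical
  have hQ : (fun f g : {M : Matrix (Fin (n+1)) (Fin (n+1)) ℂ // UT n M} =>
      ∃ h₁ h₂ : Matrix (Fin (n+1)) (Fin (n+1)) ℂ,
        UT n h₁ ∧ IsUnit h₁ ∧ UT n h₂ ∧ IsUnit h₂ ∧
          (g : Matrix (Fin (n+1)) (Fin (n+1)) ℂ) = h₂ * (f : Matrix (Fin (n+1)) (Fin (n+1)) ℂ) * h₁⁻¹)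
      = Stmt6.Rel n := rfl
  rw [hQ]
  have key : Nat.card (Quot (Stmt6.Rel n))
      = Nat.card {p : Fin (n+1) → Option (Fin (n+1)) // Stmt6.IsPP p} := by
    refine (Nat.card_eq_of_bijective
      (fun p : {p // Stmt6.IsPP p} =>
        Quot.mk (Stmt6.Rel n) ⟨Stmt6.PMat p.1, Stmt6.pmat_ut p.2⟩) ⟨?_, ?_⟩).symm
    · rintro ⟨p, hp⟩ ⟨q, hq⟩ h
      refine Subtype.ext (Stmt6.partC hp hq ?_)
      have := Quot.eq.mp h
      rwa [Stmt6.rel_equiv.eqvGen_eq] at this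
    · intro x
      induction x using Quot.ind with
      | _ f =>
        obtain ⟨p, hp, hrel⟩ := Stmt6.partB f
        exact ⟨⟨p, hp⟩, (Quot.sound hrel).symm⟩
  rw [key]
  exact Stmt6.partD b hb0 hb
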